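/- Asymptotic vacuum solution: let c₀, c₁ ∈ ℝ, and on the interval {r : r + c₁ > 0} define a(r) = exp(-c₀/(r + c₁)) and f(r) = (r + c₁)²·exp(c₀/(r + c₁)). Then these functions satisfy the vacuum field equations (f·a')' = 0 and f'·a' + a·f'' = 2 at every point of that interval. -/

import Mathlib

open Real

noncomputable section

/-- The asymptotic lapse `a(r) = exp(-c₀/(r + c₁))`. -/
def aVac (c₀ c₁ : ℝ) (r : ℝ) : ℝ := Real.exp (-(c₀ / (r + c₁)))

/-- The asymptotic squared areal radius `f(r) = (r + c₁)²·exp(c₀/(r + c₁))`. -/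
def fVac (c₀ c₁ : ℝ) (r : ℝ) : ℝ := (r + c₁) ^ 2 * Real.exp (c₀ / (r + c₁))

lemma hasDerivAt_inner (c₀ c₁ s : ℝ) (hs : s + c₁ ≠ 0) :
    HasDerivAt (fun r => c₀ / (r + c₁)) (-(c₀ / (s + c₁) ^ 2)) s := by
  have h1 : HasDerivAt (fun r : ℝ => r + c₁) 1 s := (hasDerivAt_id s).add_const c₁
  have := (hasDerivAt_const s c₀).div h1 hs
  refine this.congr_deriv ?_
  field_simp
  ring

lemma hasDerivAt_aVac (c₀ c₁ s : ℝ) (hs : s + c₁ ≠ 0) :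
    HasDerivAt (aVac c₀ c₁) (c₀ / (s + c₁) ^ 2 * Real.exp (-(c₀ / (s + c₁)))) s := by
  have h := ((hasDerivAt_inner c₀ c₁ s hs).fun_neg).exp
  refine h.congr_deriv ?_
  ring

lemma hasDerivAt_fVac (c₀ c₁ s : ℝ) (hs : s + c₁ ≠ 0) :
    HasDerivAt (fVac c₀ c₁) ((2 * (s + c₁) - c₀) * Real.exp (c₀ / (s + c₁))) s := by
  have h1 : HasDerivAt (fun r : ℝ => (r + c₁) ^ 2) (2 * (s + c₁)) s := by
    have := ((hasDerivAt_id s).add_const c₁).fun_pow 2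
    refine this.congr_deriv ?_; simp
  have h2 := (hasDerivAt_inner c₀ c₁ s hs).exp
  have h := h1.fun_mul h2
  refine h.congr_deriv ?_
  field_simp
  ring

theorem asymptotic_vacuum_solution (c₀ c₁ : ℝ) (r : ℝ) (hr : 0 < r + c₁) :
    deriv (fun s => fVac c₀ c₁ s * deriv (aVac c₀ c₁) s) r = 0 ∧
    deriv (fVac c₀ c₁) r * deriv (aVac c₀ c₁) r +
      aVac c₀ c₁ r * deriv (deriv (fVac c₀ c₁)) r = 2 := by
  have hopen : IsOpen {s : ℝ | 0 < s + c₁} := by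
    have : Continuous (fun s : ℝ => s + c₁) := by continuity
    exact isOpen_lt continuous_const this
  have hmem : {s : ℝ | 0 < s + c₁} ∈ nhds r := hopen.mem_nhds hr
  have hrne : r + c₁ ≠ 0 := ne_of_gt hr
  constructor
  · -- f·a' = c₀ near r
    have heq : (fun s => fVac c₀ c₁ s * deriv (aVac c₀ c₁) s) =ᶠ[nhds r] fun _ => c₀ := by
      filter_upwards [hmem] with s hs
      have hsne : s + c₁ ≠ 0 := ne_of_gt hs
      rw [(hasDerivAt_aVac c₀ c₁ s hsne).deriv]
      unfold fVac
      rw [Real.exp_neg]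
      field_simp
    rw [heq.deriv_eq, deriv_const]
  · have hda := (hasDerivAt_aVac c₀ c₁ r hrne).deriv
    have hdf := (hasDerivAt_fVac c₀ c₁ r hrne).deriv
    have heq : deriv (fVac c₀ c₁) =ᶠ[nhds r]
        fun s => (2 * (s + c₁) - c₀) * Real.exp (c₀ / (s + c₁)) := by
      filter_upwards [hmem] with s hs
      exact (hasDerivAt_fVac c₀ c₁ s (ne_of_gt hs)).deriv
    have hdd : deriv (deriv (fVac c₀ c₁)) r
        = (2 - c₀ * (2 * (r + c₁) - c₀) / (r + c₁) ^ 2) * Real.exp (c₀ / (r + c₁)) := by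
      rw [heq.deriv_eq]
      have h1 : HasDerivAt (fun s : ℝ => 2 * (s + c₁) - c₀) 2 r := by
        have := (((hasDerivAt_id r).add_const c₁).const_mul 2).sub_const c₀
        refine this.congr_deriv ?_; ring
      have h2 := (hasDerivAt_inner c₀ c₁ r hrne).exp
      have h := (h1.fun_mul h2).deriv
      rw [h]
      field_simp
      ring
    rw [hda, hdf, hdd]
    unfold aVac
    rw [Real.exp_neg]
    have hexp : Real.exp (c₀ / (r + c₁)) ≠ 0 := Real.exp_ne_zero _
    field_simp
    ring
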